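/- Adding a new vertex to a closed polygon cannot decrease its total curvature; moreover the total curvature strictly increases if the new vertex a_j together with the three adjacent vertices a_{j-1}, a_{j+1}, a_{j+2} are not coplanar. -/

import Mathlib

open InnerProductGeometry

noncomputable section

/-- The total curvature of a closed polygon with vertices `w 0, …, w (n+2)`
(cyclically): the sum of the exterior angles between consecutive edges. -/
def polygonTC (n : ℕ) (w : Fin (n + 3) → EuclideanSpace ℝ (Fin 3)) : ℝ :=
  ∑ i : Fin (n + 3), angle (w (i + 1) - w i) (w (i + 2) - w (i + 1))

section Aux

open Real
open scoped RealInnerProductSpace InnerProductSpace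

variable {V : Type*} [NormedAddCommGroup V] [InnerProductSpace ℝ V]

lemma sin_angle_unit {x y : V} (hx : ‖x‖ = 1) (hy : ‖y‖ = 1) :
    Real.sin (angle x y) = Real.sqrt (1 - ⟪x, y⟫ ^ 2) := by
  rw [angle, hx, hy, mul_one, div_one, Real.sin_arccos]

lemma cos_angle_unit {x y : V} (hx : ‖x‖ = 1) (hy : ‖y‖ = 1) :
    Real.cos (angle x y) = ⟪x, y⟫ := by
  rw [cos_angle, hx, hy, mul_one, div_one]

lemma inner_sub_proj {x y z : V} (hy : ‖y‖ = 1) :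
    ⟪x - ⟪x, y⟫ • y, z - ⟪y, z⟫ • y⟫ = ⟪x, z⟫ - ⟪x, y⟫ * ⟪y, z⟫ := by
  simp [inner_sub_left, inner_sub_right, real_inner_smul_left, real_inner_smul_right,
    real_inner_self_eq_norm_sq, hy, real_inner_comm x y]

lemma norm_sub_proj {x y : V} (hx : ‖x‖ = 1) (hy : ‖y‖ = 1) :
    ‖x - ⟪x, y⟫ • y‖ ^ 2 = 1 - ⟪x, y⟫ ^ 2 := by
  rw [← real_inner_self_eq_norm_sq]
  simp only [inner_sub_left, inner_sub_right, real_inner_smul_left, real_inner_smul_right,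
    real_inner_self_eq_norm_sq, hx, hy, real_inner_comm x y]
  rw [norm_smul, Real.norm_eq_abs, mul_pow, sq_abs, hy]
  ring

lemma indep_proj {x y z : V} (h : LinearIndependent ℝ ![x, y, z]) (a b : ℝ) :
    LinearIndependent ℝ ![x - a • y, z - b • y] := by
  rw [LinearIndependent.pair_iff]
  intro s t hst
  have h3 := Fintype.linearIndependent_iff.mp h ![s, -(s * a) - t * b, t] ?_
  · exact ⟨h3 0, h3 2⟩
  · have : ∑ i, (![s, -(s * a) - t * b, t]) i • (![x, y, z]) i
        = s • (x - a • y) + t • (z - b • y) := by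
      simp [Fin.sum_univ_three]
      module
    rw [this, hst]

lemma sqrt_prep {x y z : V} (hx : ‖x‖ = 1) (hy : ‖y‖ = 1) (hz : ‖z‖ = 1) :
    Real.cos (angle x y + angle y z)
      = ⟪x, y⟫ * ⟪y, z⟫ - ‖x - ⟪x, y⟫ • y‖ * ‖z - ⟪y, z⟫ • y‖ := by
  have hns := norm_sub_proj hx hy
  have hnt : ‖z - ⟪y, z⟫ • y‖ ^ 2 = 1 - ⟪y, z⟫ ^ 2 := by
    have := norm_sub_proj hz hy
    rwa [real_inner_comm y z] at this
  have hs : Real.sqrt (1 - ⟪x, y⟫ ^ 2) = ‖x - ⟪x, y⟫ • y‖ := by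
    rw [← hns, Real.sqrt_sq (norm_nonneg _)]
  have ht : Real.sqrt (1 - ⟪y, z⟫ ^ 2) = ‖z - ⟪y, z⟫ • y‖ := by
    rw [← hnt, Real.sqrt_sq (norm_nonneg _)]
  rw [Real.cos_add, cos_angle_unit hx hy, cos_angle_unit hy hz, sin_angle_unit hx hy,
    sin_angle_unit hy hz, hs, ht]

lemma core_le {x y z : V} (hx : ‖x‖ = 1) (hy : ‖y‖ = 1) (hz : ‖z‖ = 1) :
    Real.cos (angle x y + angle y z) ≤ ⟪x, z⟫ := by
  rw [sqrt_prep hx hy hz]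
  have key := inner_sub_proj (x := x) (y := y) (z := z) hy
  have habs := abs_real_inner_le_norm (x - ⟪x, y⟫ • y) (z - ⟪y, z⟫ • y)
  rw [key] at habs
  have := (abs_le.mp habs).1
  linarith

lemma core_lt {x y z : V} (hx : ‖x‖ = 1) (hy : ‖y‖ = 1) (hz : ‖z‖ = 1)
    (h : LinearIndependent ℝ ![x, y, z]) :
    Real.cos (angle x y + angle y z) < ⟪x, z⟫ := by
  rw [sqrt_prep hx hy hz]
  have key := inner_sub_proj (x := x) (y := y) (z := z) hy
  have hpair := indep_proj h ⟪x, y⟫ ⟪y, z⟫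
  set s := x - ⟪x, y⟫ • y
  set t := z - ⟪y, z⟫ • y
  have h2 : ⟪-s, t⟫ < ‖-s‖ * ‖t‖ := by
    rw [inner_lt_norm_mul_iff_real]
    intro hcon
    rw [norm_neg] at hcon
    have hdep : (-‖t‖) • s + (-‖s‖) • t = 0 := by
      linear_combination (norm := module) hcon
    have h12 := LinearIndependent.pair_iff.mp hpair (-‖t‖) (-‖s‖) hdep
    have ht0 : t = 0 := norm_eq_zero.mp (by linarith [h12.1])
    exact hpair.ne_zero 1 (by simpa using ht0)
  rw [inner_neg_left, norm_neg] at h2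
  have h2' : -(‖s‖ * ‖t‖) < ⟪s, t⟫ := by linarith
  rw [key] at h2'
  linarith

lemma norm_inv_smul_unit {x : V} (hx : x ≠ 0) : ‖(‖x‖⁻¹ • x)‖ = 1 := by
  rw [norm_smul, norm_inv, norm_norm, inv_mul_cancel₀ (norm_ne_zero_iff.mpr hx)]

lemma angle_triangle_TC (x y z : V) : angle x z ≤ angle x y + angle y z := by
  by_cases hx : x = 0
  · subst hx
    rw [angle_zero_left, angle_zero_left]
    linarith [angle_nonneg y z]
  by_cases hz : z = 0
  · subst hz
    rw [angle_zero_right, angle_zero_right]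
    linarith [angle_nonneg x y]
  by_cases hy : y = 0
  · subst hy
    rw [angle_zero_right, angle_zero_left]
    linarith [angle_le_pi x z]
  have hxp : (0:ℝ) < ‖x‖⁻¹ := inv_pos.mpr (norm_pos_iff.mpr hx)
  have hyp : (0:ℝ) < ‖y‖⁻¹ := inv_pos.mpr (norm_pos_iff.mpr hy)
  have hzp : (0:ℝ) < ‖z‖⁻¹ := inv_pos.mpr (norm_pos_iff.mpr hz)
  set x' := ‖x‖⁻¹ • x with hx'
  set y' := ‖y‖⁻¹ • y with hy'
  set z' := ‖z‖⁻¹ • z with hz'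
  have e1 : angle x z = angle x' z' := by
    rw [hx', hz', angle_smul_left_of_pos _ _ hxp, angle_smul_right_of_pos _ _ hzp]
  have e2 : angle x y = angle x' y' := by
    rw [hx', hy', angle_smul_left_of_pos _ _ hxp, angle_smul_right_of_pos _ _ hyp]
  have e3 : angle y z = angle y' z' := by
    rw [hy', hz', angle_smul_left_of_pos _ _ hyp, angle_smul_right_of_pos _ _ hzp]
  rw [e1, e2, e3]
  have ux : ‖x'‖ = 1 := norm_inv_smul_unit hx
  have uy : ‖y'‖ = 1 := norm_inv_smul_unit hy
  have uz : ‖z'‖ = 1 := norm_inv_smul_unit hz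
  by_cases hsum : angle x' y' + angle y' z' ≤ π
  · have hcore := core_le ux uy uz
    rw [← cos_angle_unit ux uz] at hcore
    have hmem1 : angle x' z' ∈ Set.Icc 0 π := ⟨angle_nonneg _ _, angle_le_pi _ _⟩
    have hmem2 : angle x' y' + angle y' z' ∈ Set.Icc 0 π :=
      ⟨by linarith [angle_nonneg x' y', angle_nonneg y' z'], hsum⟩
    exact (Real.strictAntiOn_cos.le_iff_ge hmem2 hmem1).mp hcore
  · linarith [angle_le_pi x' z']

lemma angle_triangle_lt_TC {x y z : V} (h : LinearIndependent ℝ ![x, y, z]) :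
    angle x z < angle x y + angle y z := by
  have hx : x ≠ 0 := by have := h.ne_zero 0; simpa using this
  have hy : y ≠ 0 := by have := h.ne_zero 1; simpa using this
  have hz : z ≠ 0 := by have := h.ne_zero 2; simpa using this
  have hxp : (0:ℝ) < ‖x‖⁻¹ := inv_pos.mpr (norm_pos_iff.mpr hx)
  have hyp : (0:ℝ) < ‖y‖⁻¹ := inv_pos.mpr (norm_pos_iff.mpr hy)
  have hzp : (0:ℝ) < ‖z‖⁻¹ := inv_pos.mpr (norm_pos_iff.mpr hz)
  set x' := ‖x‖⁻¹ • x with hx'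
  set y' := ‖y‖⁻¹ • y with hy'
  set z' := ‖z‖⁻¹ • z with hz'
  have e1 : angle x z = angle x' z' := by
    rw [hx', hz', angle_smul_left_of_pos _ _ hxp, angle_smul_right_of_pos _ _ hzp]
  have e2 : angle x y = angle x' y' := by
    rw [hx', hy', angle_smul_left_of_pos _ _ hxp, angle_smul_right_of_pos _ _ hyp]
  have e3 : angle y z = angle y' z' := by
    rw [hy', hz', angle_smul_left_of_pos _ _ hyp, angle_smul_right_of_pos _ _ hzp]
  rw [e1, e2, e3]
  have ux : ‖x'‖ = 1 := norm_inv_smul_unit hx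
  have uy : ‖y'‖ = 1 := norm_inv_smul_unit hy
  have uz : ‖z'‖ = 1 := norm_inv_smul_unit hz
  have h' : LinearIndependent ℝ ![x', y', z'] := by
    have hw := h.units_smul ![Units.mk0 ‖x‖⁻¹ (ne_of_gt hxp), Units.mk0 ‖y‖⁻¹ (ne_of_gt hyp),
      Units.mk0 ‖z‖⁻¹ (ne_of_gt hzp)]
    convert hw using 1
    funext i
    fin_cases i <;> rfl
  by_cases hsum : angle x' y' + angle y' z' ≤ π
  · have hcore := core_lt ux uy uz h'
    rw [← cos_angle_unit ux uz] at hcore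
    have hmem1 : angle x' z' ∈ Set.Icc 0 π := ⟨angle_nonneg _ _, angle_le_pi _ _⟩
    have hmem2 : angle x' y' + angle y' z' ∈ Set.Icc 0 π :=
      ⟨by linarith [angle_nonneg x' y', angle_nonneg y' z'], hsum⟩
    exact (Real.strictAntiOn_cos.lt_iff_gt hmem2 hmem1).mp hcore
  · linarith [angle_le_pi x' z']

lemma angle_split_TC {p q : V} (hp : p ≠ 0) (hb : p + q ≠ 0) :
    angle p q = angle p (p + q) + angle (p + q) q := by
  have h := angle_add_angle_sub_add_angle_sub_eq_pi p hb
  have h1 : p - (p + q) = -q := by abel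
  have h2 : p + q - p = q := by abel
  rw [h1, h2, angle_neg_right] at h
  linarith

lemma key_le (a p q c : V) :
    angle a (p + q) + angle (p + q) c ≤ angle a p + angle p q + angle q c := by
  by_cases hp : p = 0
  · subst hp
    rw [angle_zero_right, angle_zero_left, zero_add]
    linarith [angle_le_pi a q, pi_pos]
  by_cases hq : q = 0
  · subst hq
    rw [angle_zero_right, angle_zero_left, add_zero]
    linarith [angle_le_pi p c, pi_pos]
  by_cases hb : p + q = 0
  · rw [hb, angle_zero_right, angle_zero_left]
    have hqe : q = -p := by linear_combination (norm := module) hb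
    rw [hqe, angle_neg_right, angle_self hp]
    linarith [angle_nonneg a p, angle_nonneg (-p) c]
  calc angle a (p + q) + angle (p + q) c
      ≤ (angle a p + angle p (p + q)) + (angle (p + q) q + angle q c) := by
        gcongr ?_ + ?_
        · exact angle_triangle_TC a p (p + q)
        · exact angle_triangle_TC (p + q) q c
    _ = angle a p + angle p q + angle q c := by
        rw [angle_split_TC hp hb]; ring

lemma key_lt {a p q c : V} (h : LinearIndependent ℝ ![p, q, c]) :
    angle a (p + q) + angle (p + q) c < angle a p + angle p q + angle q c := by
  have hp : p ≠ 0 := by have := h.ne_zero 0; simpa using this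
  have hq : q ≠ 0 := by have := h.ne_zero 1; simpa using this
  have hb : p + q ≠ 0 := by
    intro h0
    have h2 := Fintype.linearIndependent_iff.mp h ![1, 1, 0] ?_
    · simpa using h2 0
    · have : ∑ i, (![(1:ℝ), 1, 0]) i • (![p, q, c]) i = p + q := by
        simp [Fin.sum_univ_three]
      rw [this, h0]
  have hbqc : LinearIndependent ℝ ![p + q, q, c] := by
    rw [Fintype.linearIndependent_iff]
    intro g hg
    have h3 := Fintype.linearIndependent_iff.mp h ![g 0, g 0 + g 1, g 2] ?_
    · intro i
      fin_cases i
      · exact h3 0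
      · have := h3 1; have h0 := h3 0; simp at this h0 ⊢; linarith
      · exact h3 2
    · have : ∑ i, (![g 0, g 0 + g 1, g 2]) i • (![p, q, c]) i
          = ∑ i, g i • (![p + q, q, c]) i := by
        simp [Fin.sum_univ_three]
        module
      rw [this, hg]
  have h1 : angle a (p + q) ≤ angle a p + angle p (p + q) := angle_triangle_TC _ _ _
  have h2 : angle (p + q) c < angle (p + q) q + angle q c := angle_triangle_lt_TC hbqc
  have h3 := angle_split_TC hp hb
  linarith

lemma span_pair_rank_le {V : Type*} [NormedAddCommGroup V] [InnerProductSpace ℝ V]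
    (u w : V) : Module.rank ℝ (Submodule.span ℝ ({u, w} : Set V)) ≤ 2 := by
  refine (rank_span_le _).trans ?_
  have : ({u, w} : Set V) = insert u {w} := rfl
  calc (Cardinal.mk ({u, w} : Set V)) ≤ Cardinal.mk ({w} : Set V) + 1 :=
        Cardinal.mk_insert_le
    _ ≤ 2 := by simp [Cardinal.mk_singleton]; norm_num


lemma coplanar_of_not_indep {P0 P1 P2 P3 : EuclideanSpace ℝ (Fin 3)}
    (h : ¬ LinearIndependent ℝ ![P1 - P0, P2 - P1, P3 - P2]) :
    Coplanar ℝ ({P0, P1, P2, P3} : Set (EuclideanSpace ℝ (Fin 3))) := by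
  rw [Fintype.linearIndependent_iff] at h
  push_neg at h
  obtain ⟨g, hg, i, hi⟩ := h
  have hsum : g 0 • (P1 - P0) + g 1 • (P2 - P1) + g 2 • (P3 - P2) = 0 := by
    simpa [Fin.sum_univ_three] using hg
  have hW : ∃ u w : EuclideanSpace ℝ (Fin 3),
      (P1 - P0) ∈ Submodule.span ℝ ({u, w} : Set _) ∧
      (P2 - P1) ∈ Submodule.span ℝ ({u, w} : Set _) ∧
      (P3 - P2) ∈ Submodule.span ℝ ({u, w} : Set _) := by
    have mem_uw : ∀ u w : EuclideanSpace ℝ (Fin 3),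
        u ∈ Submodule.span ℝ ({u, w} : Set _) ∧ w ∈ Submodule.span ℝ ({u, w} : Set _) :=
      fun u w => ⟨Submodule.subset_span (by simp), Submodule.subset_span (by simp)⟩
    fin_cases i
    · refine ⟨P2 - P1, P3 - P2, ?_, (mem_uw _ _).1, (mem_uw _ _).2⟩
      have h0 : g 0 ≠ 0 := hi
      have hgp : g 0 • (P1 - P0) = (-(g 1)) • (P2 - P1) + (-(g 2)) • (P3 - P2) := by
        linear_combination (norm := module) hsum
      have hrw : P1 - P0 = (g 0)⁻¹ • (g 0 • (P1 - P0)) := (inv_smul_smul₀ h0 _).symm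
      rw [hrw, hgp]
      exact Submodule.smul_mem _ _ (Submodule.add_mem _
        (Submodule.smul_mem _ _ (mem_uw _ _).1) (Submodule.smul_mem _ _ (mem_uw _ _).2))
    · refine ⟨P1 - P0, P3 - P2, (mem_uw _ _).1, ?_, (mem_uw _ _).2⟩
      have h0 : g 1 ≠ 0 := hi
      have hgp : g 1 • (P2 - P1) = (-(g 0)) • (P1 - P0) + (-(g 2)) • (P3 - P2) := by
        linear_combination (norm := module) hsum
      have hrw : P2 - P1 = (g 1)⁻¹ • (g 1 • (P2 - P1)) := (inv_smul_smul₀ h0 _).symm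
      rw [hrw, hgp]
      exact Submodule.smul_mem _ _ (Submodule.add_mem _
        (Submodule.smul_mem _ _ (mem_uw _ _).1) (Submodule.smul_mem _ _ (mem_uw _ _).2))
    · refine ⟨P1 - P0, P2 - P1, (mem_uw _ _).1, (mem_uw _ _).2, ?_⟩
      have h0 : g 2 ≠ 0 := hi
      have hgp : g 2 • (P3 - P2) = (-(g 0)) • (P1 - P0) + (-(g 1)) • (P2 - P1) := by
        linear_combination (norm := module) hsum
      have hrw : P3 - P2 = (g 2)⁻¹ • (g 2 • (P3 - P2)) := (inv_smul_smul₀ h0 _).symm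
      rw [hrw, hgp]
      exact Submodule.smul_mem _ _ (Submodule.add_mem _
        (Submodule.smul_mem _ _ (mem_uw _ _).1) (Submodule.smul_mem _ _ (mem_uw _ _).2))
  obtain ⟨u, w, hpu, hqu, hcu⟩ := hW
  have hvs : vectorSpan ℝ ({P0, P1, P2, P3} : Set (EuclideanSpace ℝ (Fin 3)))
      ≤ Submodule.span ℝ ({u, w} : Set _) := by
    rw [vectorSpan, Submodule.span_le]
    rintro d ⟨A, hA, B, hB, rfl⟩
    have hdiff : ∀ A ∈ ({P0, P1, P2, P3} : Set (EuclideanSpace ℝ (Fin 3))),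
        A - P0 ∈ Submodule.span ℝ ({u, w} : Set (EuclideanSpace ℝ (Fin 3))) := by
      rintro A (rfl | rfl | rfl | rfl)
      · simpa using Submodule.zero_mem _
      · exact hpu
      · have he : A - P0 = (P1 - P0) + (A - P1) := by abel
        rw [he]; exact Submodule.add_mem _ hpu hqu
      · have he : A - P0 = (P1 - P0) + (P2 - P1) + (A - P2) := by abel
        rw [he]; exact Submodule.add_mem _ (Submodule.add_mem _ hpu hqu) hcu
    have he : (fun x1 x2 => x1 -ᵥ x2) A B = (A - P0) - (B - P0) := by
      simp [vsub_eq_sub]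
    rw [he]
    exact Submodule.sub_mem _ (hdiff A hA) (hdiff B hB)
  calc Module.rank ℝ (vectorSpan ℝ ({P0, P1, P2, P3} : Set (EuclideanSpace ℝ (Fin 3))))
      ≤ Module.rank ℝ (Submodule.span ℝ ({u, w} : Set (EuclideanSpace ℝ (Fin 3)))) :=
        Submodule.rank_mono hvs
    _ ≤ 2 := span_pair_rank_le u w

def per (n : ℕ) (v : Fin (n + 3) → EuclideanSpace ℝ (Fin 3)) : ℕ → EuclideanSpace ℝ (Fin 3) :=
  fun k => v ⟨k % (n + 3), Nat.mod_lt _ (by omega)⟩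

lemma per_eq {n : ℕ} (v : Fin (n + 3) → EuclideanSpace ℝ (Fin 3)) {k : ℕ} (hk : k < n + 3) :
    per n v k = v ⟨k, hk⟩ := by
  unfold per; exact congrArg v (Fin.ext (by simp [Nat.mod_eq_of_lt hk]))

lemma polygonTC_eq (n : ℕ) (v : Fin (n + 3) → EuclideanSpace ℝ (Fin 3)) :
    polygonTC n v = ∑ k ∈ Finset.range (n + 3),
      angle (per n v (k + 1) - per n v k) (per n v (k + 2) - per n v (k + 1)) := by
  rw [polygonTC, ← Fin.sum_univ_eq_sum_range]
  apply Finset.sum_congr rfl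
  intro i _
  have h0 : v i = per n v i.val := by
    unfold per; exact congrArg v (Fin.ext (by simp [Nat.mod_eq_of_lt i.isLt]))
  have h1 : v (i + 1) = per n v (i.val + 1) := by
    unfold per; exact congrArg v (Fin.ext (by simp [Fin.add_def]))
  have h2 : v (i + 2) = per n v (i.val + 2) := by
    unfold per; exact congrArg v (Fin.ext (by simp [Fin.add_def]))
  rw [h0, h1, h2]

end Aux

section Main
open Real

lemma per_snoc_lt {n : ℕ} (v : Fin (n + 3) → EuclideanSpace ℝ (Fin 3))
    (x : EuclideanSpace ℝ (Fin 3)) {k : ℕ} (hk : k < n + 3) :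
    per (n + 1) (Fin.snoc v x) k = v ⟨k, hk⟩ := by
  rw [per_eq _ (show k < n + 4 by omega)]
  have : (⟨k, show k < n + 4 by omega⟩ : Fin (n + 4)) = Fin.castSucc ⟨k, hk⟩ :=
    Fin.ext (by simp)
  rw [this, Fin.snoc_castSucc]

lemma per_snoc_last {n : ℕ} (v : Fin (n + 3) → EuclideanSpace ℝ (Fin 3))
    (x : EuclideanSpace ℝ (Fin 3)) :
    per (n + 1) (Fin.snoc v x) (n + 3) = x := by
  rw [per_eq _ (show n + 3 < n + 4 by omega)]
  have : (⟨n + 3, show n + 3 < n + 4 by omega⟩ : Fin (n + 4)) = Fin.last (n + 3) :=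
    Fin.ext (by simp)
  rw [this, Fin.snoc_last]

/-- Adding a new vertex `x` to a closed polygon (inserted between the last
vertex and the first) cannot decrease its total curvature; moreover the total
curvature strictly increases if the new vertex together with its neighbor
`v (n+2)` and the following two vertices `v 0`, `v 1` are not coplanar. -/
theorem polygonTC_le_polygonTC_snoc (n : ℕ)
    (v : Fin (n + 3) → EuclideanSpace ℝ (Fin 3))
    (x : EuclideanSpace ℝ (Fin 3)) :
    polygonTC n v ≤ polygonTC (n + 1) (Fin.snoc v x) ∧
    (¬ Coplanar ℝ {v (Fin.last (n + 2)), x, v 0, v 1} →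
      polygonTC n v < polygonTC (n + 1) (Fin.snoc v x)) := by
  set w : Fin (n + 4) → EuclideanSpace ℝ (Fin 3) := Fin.snoc v x with hw
  -- evaluations of `per`
  have e0 : per n v (n + 3) = v 0 := by
    unfold per; exact congrArg v (Fin.ext (by simp))
  have e1 : per n v (n + 4) = v 1 := by
    unfold per
    refine congrArg v (Fin.ext ?_)
    have h1 : (n + 4) % (n + 3) = 1 := by
      rw [show n + 4 = (n + 3) + 1 from rfl, Nat.add_mod_left]
      exact Nat.mod_eq_of_lt (by omega)
    show (n + 4) % (n + 3) = ((1 : Fin (n + 3)) : ℕ)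
    rw [h1, Fin.val_one]
  have f3 : per (n + 1) w (n + 3) = x := per_snoc_last v x
  have f4 : per (n + 1) w (n + 4) = v 0 := by
    unfold per
    have h1 : (n + 4) % (n + 4) = 0 := Nat.mod_self _
    have : (⟨(n + 4) % (n + 4), Nat.mod_lt _ (by omega)⟩ : Fin (n + 4))
        = Fin.castSucc (0 : Fin (n + 3)) := Fin.ext (by simp [h1])
    rw [this, hw, Fin.snoc_castSucc]
  have f5 : per (n + 1) w (n + 5) = v 1 := by
    unfold per
    have h1 : (n + 5) % (n + 4) = 1 := by
      rw [show n + 5 = (n + 4) + 1 from rfl, Nat.add_mod_left]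
      exact Nat.mod_eq_of_lt (by omega)
    have : (⟨(n + 5) % (n + 4), Nat.mod_lt _ (by omega)⟩ : Fin (n + 4))
        = Fin.castSucc (1 : Fin (n + 3)) := Fin.ext (by simp [h1])
    rw [this, hw, Fin.snoc_castSucc]
  -- the sums
  have hv : polygonTC n v = (∑ k ∈ Finset.range (n + 1),
      angle (per n v (k + 1) - per n v k) (per n v (k + 2) - per n v (k + 1)))
      + (angle (v ⟨n + 2, by omega⟩ - v ⟨n + 1, by omega⟩) (v 0 - v ⟨n + 2, by omega⟩)
        + angle (v 0 - v ⟨n + 2, by omega⟩) (v 1 - v 0)) := by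
    rw [polygonTC_eq, Finset.sum_range_succ, Finset.sum_range_succ]
    simp only [show n + 1 + 1 = n + 2 by omega, show n + 1 + 2 = n + 3 by omega,
      show n + 2 + 1 = n + 3 by omega, show n + 2 + 2 = n + 4 by omega]
    rw [e0, e1, per_eq v (show n + 1 < n + 3 by omega), per_eq v (show n + 2 < n + 3 by omega)]
    ring
  have hwsum : polygonTC (n + 1) w = (∑ k ∈ Finset.range (n + 1),
      angle (per (n + 1) w (k + 1) - per (n + 1) w k)
        (per (n + 1) w (k + 2) - per (n + 1) w (k + 1)))
      + (angle (v ⟨n + 2, by omega⟩ - v ⟨n + 1, by omega⟩) (x - v ⟨n + 2, by omega⟩)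
        + angle (x - v ⟨n + 2, by omega⟩) (v 0 - x)
        + angle (v 0 - x) (v 1 - v 0)) := by
    rw [polygonTC_eq, Finset.sum_range_succ, Finset.sum_range_succ, Finset.sum_range_succ]
    simp only [show n + 1 + 3 = n + 4 by omega, show n + 1 + 1 = n + 2 by omega,
      show n + 1 + 2 = n + 3 by omega, show n + 2 + 1 = n + 3 by omega,
      show n + 2 + 2 = n + 4 by omega, show n + 3 + 1 = n + 4 by omega,
      show n + 3 + 2 = n + 5 by omega]
    rw [f3, f4, f5, per_snoc_lt v x (show n + 1 < n + 3 by omega),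
      per_snoc_lt v x (show n + 2 < n + 3 by omega)]
    ring
  have hcommon : (∑ k ∈ Finset.range (n + 1),
      angle (per n v (k + 1) - per n v k) (per n v (k + 2) - per n v (k + 1)))
      = ∑ k ∈ Finset.range (n + 1),
      angle (per (n + 1) w (k + 1) - per (n + 1) w k)
        (per (n + 1) w (k + 2) - per (n + 1) w (k + 1)) := by
    refine Finset.sum_congr rfl fun k hk => ?_
    have hk' : k < n + 1 := Finset.mem_range.mp hk
    rw [per_eq v (show k < n + 3 by omega), per_eq v (show k + 1 < n + 3 by omega),
      per_eq v (show k + 2 < n + 3 by omega), per_snoc_lt v x (show k < n + 3 by omega),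
      per_snoc_lt v x (show k + 1 < n + 3 by omega),
      per_snoc_lt v x (show k + 2 < n + 3 by omega)]
  -- geometric data
  have hb : v 0 - v ⟨n + 2, by omega⟩ = (x - v ⟨n + 2, by omega⟩) + (v 0 - x) := by abel
  have hlast : v (Fin.last (n + 2)) = v ⟨n + 2, by omega⟩ := rfl
  constructor
  · rw [hv, hwsum, hcommon, hb]
    have := key_le (v ⟨n + 2, by omega⟩ - v ⟨n + 1, by omega⟩) (x - v ⟨n + 2, by omega⟩)
      (v 0 - x) (v 1 - v 0)
    linarith
  · intro hcop
    have hind : LinearIndependent ℝ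
        ![x - v ⟨n + 2, by omega⟩, v 0 - x, v 1 - v 0] := by
      by_contra hcon
      exact hcop (by rw [hlast]; exact coplanar_of_not_indep hcon)
    rw [hv, hwsum, hcommon, hb]
    have := key_lt (a := v ⟨n + 2, by omega⟩ - v ⟨n + 1, by omega⟩) hind
    linarith

end Main
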